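/- arXiv:1311.6879 — 3 statements merged into one kernel-verified Lean document; each statement's English description precedes it below -/
import Mathlib

section
/- If an n-cell null-boundary CA (n ≥ 3) has an interior rule f_i (1 ≤ i ≤ n−2, 0-indexed) that is unbalanced, i.e., f_i takes some value d on strictly more than 4 of its 8 inputs, then the global transition map is not injective; hence the CA is irreversible. -/
/-- State extended by null boundary values. -/
def ext {n : ℕ} (s : Fin n → Bool) (k : ℕ) : Bool :=
  if h : k < n then s ⟨k, h⟩ else false

/-- Global map of the null-boundary CA with rule vector `f`. -/
def glob {n : ℕ} (f : Fin n → (Bool × Bool × Bool → Bool)) (s : Fin n → Bool) :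
    Fin n → Bool :=
  fun i => f i (if (i : ℕ) = 0 then false else ext s ((i : ℕ) - 1), s i, ext s ((i : ℕ) + 1))

/-- An interior unbalanced rule makes the global map non-injective. -/
theorem unbalanced_interior_irreversible {n : ℕ} (hn : 3 ≤ n)
    (f : Fin n → (Bool × Bool × Bool → Bool)) (i : Fin n)
    (h1 : 1 ≤ (i : ℕ)) (h2 : (i : ℕ) ≤ n - 2)
    (hunb : (Finset.univ.filter (fun x : Bool × Bool × Bool => f i x = true)).card ≠ 4) :
    ¬ Function.Injective (glob f) := by
  intro hinj
  have hbij : Function.Bijective (glob f) := Finite.injective_iff_bijective.mp hinj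
  have hilt : (i : ℕ) < n := i.isLt
  have hm1 : (i : ℕ) - 1 < n := by omega
  have hp1 : (i : ℕ) + 1 < n := by omega
  set im : Fin n := ⟨(i : ℕ) - 1, hm1⟩ with him
  set ip : Fin n := ⟨(i : ℕ) + 1, hp1⟩ with hip
  have hne1 : im ≠ i := by apply Fin.ne_of_val_ne; simp [him]; omega
  have hne2 : im ≠ ip := by apply Fin.ne_of_val_ne; simp [him, hip]
  have hne3 : i ≠ ip := by apply Fin.ne_of_val_ne; simp [hip]
  set trip : (Fin n → Bool) → Bool × Bool × Bool := fun s => (s im, s i, s ip) with htrip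
  have hglob : ∀ s, glob f s i = f i (trip s) := by
    intro s
    simp only [glob, htrip]
    rw [if_neg (by omega : ¬ ((i : ℕ) = 0))]
    unfold ext
    rw [dif_pos hm1, dif_pos hp1]
  set write : Bool × Bool × Bool → (Fin n → Bool) → (Fin n → Bool) :=
    fun x s => Function.update (Function.update (Function.update s im x.1) i x.2.1) ip x.2.2
    with hwrite
  have htw : ∀ x s, trip (write x s) = x := by
    intro x s
    simp [htrip, hwrite, Function.update_apply, hne1, hne2, hne3, hne1.symm, hne2.symm,
      hne3.symm]
  have hww : ∀ x y s, write x (write y s) = write x s := by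
    intro x y s
    funext j
    by_cases hj1 : j = ip
    · simp [hwrite, hj1]
    · by_cases hj2 : j = i
      · simp [hwrite, hj1, hj2, Function.update_apply, hne3]
      · by_cases hj3 : j = im
        · simp [hwrite, hj1, hj2, hj3, Function.update_apply, hne1, hne2]
        · simp [hwrite, Function.update_apply, hj1, hj2, hj3]
  have hws : ∀ x s, trip s = x → write x s = s := by
    intro x s hx
    subst hx
    funext j
    by_cases hj1 : j = ip
    · simp [hwrite, htrip, hj1]
    · by_cases hj2 : j = i
      · simp [hwrite, htrip, hj1, hj2, Function.update_apply, hne3]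
      · by_cases hj3 : j = im
        · simp [hwrite, htrip, hj1, hj2, hj3, Function.update_apply, hne1, hne2]
        · simp [hwrite, Function.update_apply, hj1, hj2, hj3]
  set Fib : Bool × Bool × Bool → Finset (Fin n → Bool) :=
    fun x => Finset.univ.filter (fun s => trip s = x) with hFib
  -- all fibers of trip have the same cardinality
  have hfibcard : ∀ x y, (Fib x).card = (Fib y).card := by
    intro x y
    apply Finset.card_bij (fun s _ => write y s)
    · intro s hs
      simp [hFib, htw]
    · intro s hs s' hs' h
      simp [hFib] at hs hs'
      have : write x (write y s) = write x (write y s') := by rw [h]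
      rwa [hww, hww, hws x s hs, hws x s' hs'] at this
    · intro t ht
      simp [hFib] at ht
      refine ⟨write x t, by simp [hFib, htw], ?_⟩
      rw [hww, hws y t ht]
  have hfibpos : ∀ x, 0 < (Fib x).card := by
    intro x
    apply Finset.card_pos.mpr
    exact ⟨write x (fun _ => false), by simp [hFib, htw]⟩
  set c : ℕ := (Fib (false, false, false)).card with hc
  set T : Finset (Bool × Bool × Bool) := Finset.univ.filter (fun x => f i x = true) with hT
  set S : Finset (Fin n → Bool) := Finset.univ.filter (fun s => glob f s i = true) with hS
  -- S.card = T.card * c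
  have hSsum : S.card = ∑ x ∈ T, (S.filter (fun s => trip s = x)).card := by
    apply Finset.card_eq_sum_card_fiberwise
    intro s hs
    simp [hS] at hs
    simp [hT, ← hglob, hs]
  have hSfib : ∀ x ∈ T, (S.filter (fun s => trip s = x)) = Fib x := by
    intro x hx
    simp [hT] at hx
    ext s
    simp only [hS, hFib, Finset.mem_filter, Finset.mem_univ, true_and]
    constructor
    · rintro ⟨_, h⟩; exact h
    · intro h; exact ⟨by rw [hglob, h, hx], h⟩
  have hScard : S.card = T.card * c := by
    rw [hSsum, Finset.sum_congr rfl (fun x hx => by rw [hSfib x hx, hfibcard x (false, false, false), ← hc])]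
    rw [Finset.sum_const, smul_eq_mul]
  -- the set of states with bit i true has card 4 * c
  set U : Finset (Fin n → Bool) := Finset.univ.filter (fun s => s i = true) with hU
  set V : Finset (Bool × Bool × Bool) := Finset.univ.filter (fun x => x.2.1 = true) with hV
  have hUsum : U.card = ∑ x ∈ V, (U.filter (fun s => trip s = x)).card := by
    apply Finset.card_eq_sum_card_fiberwise
    intro s hs
    simp [hU] at hs
    simp [hV, htrip, hs]
  have hUfib : ∀ x ∈ V, (U.filter (fun s => trip s = x)) = Fib x := by
    intro x hx
    simp [hV] at hx
    ext s
    simp only [hU, hFib, Finset.mem_filter, Finset.mem_univ, true_and]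
    constructor
    · rintro ⟨_, h⟩; exact h
    · intro h
      refine ⟨?_, h⟩
      have : (trip s).2.1 = s i := rfl
      rw [← this, h, hx]
  have hVcard : V.card = 4 := by decide
  have hUcard : U.card = 4 * c := by
    rw [hUsum, Finset.sum_congr rfl (fun x hx => by rw [hUfib x hx, hfibcard x (false, false, false), ← hc])]
    rw [Finset.sum_const, smul_eq_mul, hVcard]
  -- bijectivity gives S.card = U.card
  have hSU : S.card = U.card := by
    apply Finset.card_bij (fun s _ => glob f s)
    · intro s hs
      simp [hS] at hs
      simp [hU, hs]
    · intro s _ s' _ h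
      exact hinj h
    · intro t ht
      simp [hU] at ht
      obtain ⟨s, hs⟩ := hbij.surjective t
      exact ⟨s, by simp [hS, hs, ht], hs⟩
  have : T.card * c = 4 * c := by rw [← hScard, hSU, hUcard]
  have hTc : T.card = 4 := Nat.eq_of_mul_eq_mul_right (hfibpos _) this
  exact hunb hTc
end

section
/- If the first rule f_0 of an n-cell null-boundary CA (n ≥ 2) is not balanced over its 4 effective RMTs — i.e., the restriction (c,r) ↦ f_0(false, c, r) does not take the value true on exactly 2 of its 4 inputs — then the global transition map is not injective. -/
/-- Equivalence splitting off the first two cells. -/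
def splitTwo (n : ℕ) : (Fin (n + 2) → Bool) ≃ (Bool × Bool) × (Fin n → Bool) :=
  ((Fin.consEquiv (fun _ : Fin (n + 2) => Bool)).symm.trans
    ((Equiv.refl Bool).prodCongr (Fin.consEquiv (fun _ : Fin (n + 1) => Bool)).symm)).trans
    (Equiv.prodAssoc Bool Bool (Fin n → Bool)).symm

lemma splitTwo_fst (n : ℕ) (s : Fin (n + 2) → Bool) :
    ((splitTwo n) s).1 = (s 0, s 1) := rfl

lemma card_firstTwo (n : ℕ) (p : Bool × Bool → Prop) [DecidablePred p] :
    Fintype.card {s : Fin (n + 2) → Bool // p (s 0, s 1)} =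
      (Finset.univ.filter p).card * 2 ^ n := by
  have e : {s : Fin (n + 2) → Bool // p (s 0, s 1)} ≃
      {q : Bool × Bool // p q} × (Fin n → Bool) :=
    ((splitTwo n).subtypeEquiv (fun s => by rw [splitTwo_fst])).trans
      (Equiv.prodSubtypeFstEquivSubtypeProd)
  rw [Fintype.card_congr e, Fintype.card_prod, Fintype.card_subtype]
  simp

/-- If the first rule is not balanced over its 4 effective RMTs, the CA is not injective. -/
theorem first_rule_unbalanced_irreversible {n : ℕ}
    (f : Fin (n + 2) → (Bool × Bool × Bool → Bool))
    (hunb : (Finset.univ.filter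
        (fun p : Bool × Bool => f 0 (false, p.1, p.2) = true)).card ≠ 2) :
    ¬ Function.Injective (glob f) := by
  intro hinj
  apply hunb
  have hbij : Function.Bijective (glob f) := Finite.injective_iff_bijective.mp hinj
  -- glob f s 0 = f 0 (false, s 0, s 1)
  have hg0 : ∀ s : Fin (n + 2) → Bool, glob f s 0 = f 0 (false, s 0, s 1) := by
    intro s
    have h1 : ext s 1 = s 1 := by
      have hfin : (⟨1, by omega⟩ : Fin (n + 2)) = 1 := by
        apply Fin.ext
        simp
      simp only [ext]
      rw [dif_pos (by omega : 1 < n + 2), hfin]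
    simp [glob, h1]
  have e1 : {s : Fin (n + 2) → Bool // glob f s 0 = true} ≃
      {t : Fin (n + 2) → Bool // t 0 = true} :=
    (Equiv.ofBijective (glob f) hbij).subtypeEquiv (fun s => by rfl)
  have h1 : Fintype.card {s : Fin (n + 2) → Bool // glob f s 0 = true} =
      Fintype.card {t : Fin (n + 2) → Bool // t 0 = true} := Fintype.card_congr e1
  have h2 : Fintype.card {s : Fin (n + 2) → Bool // glob f s 0 = true} =
      (Finset.univ.filter (fun p : Bool × Bool => f 0 (false, p.1, p.2) = true)).card * 2 ^ n := by
    have e2 : {s : Fin (n + 2) → Bool // glob f s 0 = true} ≃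
        {s : Fin (n + 2) → Bool //
          (fun p : Bool × Bool => f 0 (false, p.1, p.2) = true) (s 0, s 1)} :=
      Equiv.subtypeEquivRight (fun s => by rw [hg0 s])
    exact (Fintype.card_congr e2).trans
      (card_firstTwo n (fun p : Bool × Bool => f 0 (false, p.1, p.2) = true))
  have h3 : Fintype.card {t : Fin (n + 2) → Bool // t 0 = true} =
      (Finset.univ.filter (fun p : Bool × Bool => p.1 = true)).card * 2 ^ n := by
    exact card_firstTwo n (fun p : Bool × Bool => p.1 = true)
  have h4 : (Finset.univ.filter (fun p : Bool × Bool => p.1 = true)).card = 2 := by decide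
  rw [h2, h3, h4] at h1
  have := Nat.eq_of_mul_eq_mul_right (by positivity : 0 < 2 ^ n) h1
  exact this
end

section
/- If the last rule f_{n−1} of an n-cell null-boundary CA (n ≥ 2) is not balanced over its 4 effective RMTs — i.e., the restriction (l,c) ↦ f_{n−1}(l, c, false) does not take the value true on exactly 2 of its 4 inputs — then the global transition map is not injective. -/
/-- If the last rule is not balanced over its 4 effective RMTs, the CA is not injective. -/
theorem last_rule_unbalanced_irreversible {n : ℕ}
    (f : Fin (n + 2) → (Bool × Bool × Bool → Bool))
    (hunb : (Finset.univ.filter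
        (fun p : Bool × Bool => f (Fin.last (n + 1)) (p.1, p.2, false) = true)).card ≠ 2) :
    ¬ Function.Injective (glob f) := by
  intro hinj
  set g : Bool × Bool → Bool := fun p => f (Fin.last (n + 1)) (p.1, p.2, false) with hg
  -- some value b has at most one preimage pair
  obtain ⟨b, hb⟩ : ∃ b, (Finset.univ.filter (fun p : Bool × Bool => g p = b)).card ≤ 1 := by
    have hsum := Finset.card_filter_add_card_filter_not
      (s := (Finset.univ : Finset (Bool × Bool))) (p := fun p => g p = true)
    have hcu : (Finset.univ : Finset (Bool × Bool)).card = 4 := by decide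
    have hne : (Finset.univ.filter (fun p : Bool × Bool => ¬ (g p = true))).card
        = (Finset.univ.filter (fun p : Bool × Bool => g p = false)).card := by
      congr 1
      ext p
      simp [Bool.not_eq_true]
    by_cases h : (Finset.univ.filter (fun p : Bool × Bool => g p = true)).card ≤ 1
    · exact ⟨true, h⟩
    · have hunb' : (Finset.univ.filter (fun p : Bool × Bool => g p = true)).card ≠ 2 := hunb
      exact ⟨false, by omega⟩
  have hsurj : Function.Surjective (glob f) :=
    Finite.surjective_of_injective hinj
  have p0 : Fin (n + 2) := ⟨n, by omega⟩
  have hglast : ∀ s : Fin (n + 2) → Bool,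
      glob f s (Fin.last (n + 1)) = g (s ⟨n, by omega⟩, s (Fin.last (n + 1))) := by
    intro s
    show f _ _ = f _ _
    congr 1
    have h1 : ((Fin.last (n + 1) : Fin (n + 2)) : ℕ) = n + 1 := rfl
    simp only [h1, ext]
    have : ¬ (n + 1 = 0) := by omega
    rw [if_neg this]
    rw [dif_pos (show n + 1 - 1 < n + 2 by omega),
      dif_neg (show ¬ (n + 1 + 1 < n + 2) by omega)]
    rfl
  -- injection from outputs ending in b into states of length n
  let φ : {t : Fin (n + 2) → Bool // t (Fin.last (n + 1)) = b} → (Fin n → Bool) :=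
    fun t => fun j => (hsurj t.1).choose ⟨j, by omega⟩
  have hφ : Function.Injective φ := by
    intro t1 t2 hEq
    have hs1 := (hsurj t1.1).choose_spec
    have hs2 := (hsurj t2.1).choose_spec
    set s1 := (hsurj t1.1).choose with hs1d
    set s2 := (hsurj t2.1).choose with hs2d
    have hm1 : (s1 ⟨n, by omega⟩, s1 (Fin.last (n + 1))) ∈
        Finset.univ.filter (fun p : Bool × Bool => g p = b) := by
      simp only [Finset.mem_filter, Finset.mem_univ, true_and]
      rw [← hglast s1, hs1, t1.2]
    have hm2 : (s2 ⟨n, by omega⟩, s2 (Fin.last (n + 1))) ∈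
        Finset.univ.filter (fun p : Bool × Bool => g p = b) := by
      simp only [Finset.mem_filter, Finset.mem_univ, true_and]
      rw [← hglast s2, hs2, t2.2]
    have hpair := Finset.card_le_one.mp hb _ hm1 _ hm2
    have hss : s1 = s2 := by
      funext i
      rcases lt_trichotomy (i : ℕ) n with hlt | heq | hgt
      · have := congrFun hEq ⟨i, hlt⟩
        simpa using this
      · have hi : i = ⟨n, by omega⟩ := by
          apply Fin.ext; exact heq
        rw [hi]
        exact congrArg Prod.fst hpair
      · have hi : i = Fin.last (n + 1) := by
          apply Fin.ext
          have := i.isLt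
          simp only [Fin.val_last]
          omega
        rw [hi]
        exact congrArg Prod.snd hpair
    apply Subtype.ext
    rw [← hs1, ← hs2, hss]
  -- cardinality of the domain is 2^(n+1)
  have e : {t : Fin (n + 2) → Bool // t (Fin.last (n + 1)) = b} ≃ (Fin (n + 1) → Bool) :=
    { toFun := fun t j => t.1 j.castSucc
      invFun := fun u => ⟨Fin.snoc u b, by simp⟩
      left_inv := fun t => by
        apply Subtype.ext
        funext j
        induction j using Fin.lastCases with
        | last => simp [t.2]
        | cast j => simp
      right_inv := fun u => by funext j; simp }
  have hcard := Fintype.card_le_of_injective φ hφ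
  rw [Fintype.card_of_bijective e.bijective] at hcard
  simp only [Fintype.card_fun, Fintype.card_fin, Fintype.card_bool] at hcard
  have : 2 ^ (n + 1) = 2 * 2 ^ n := by ring
  have hpos : 0 < 2 ^ n := Nat.pow_pos (by omega)
  omega
end
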